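/- Let d ∈ ℕ, ξ > 0 and C ≥ ξ. Let 𝒳 be a countable set and μ : 𝒳 → ℝ^d satisfy Σ_{x∈𝒳} ‖μ(x)‖₁ ≤ C. Let V ⊆ {v ∈ ℝ^d : ‖v‖_∞ ≤ 1} be a nonempty set such that ⟨v, μ(x)⟩ ≥ 0 for all v ∈ V and x ∈ 𝒳. Suppose T ∈ ℕ, subsets 𝒳 = B₁ ⊇ B₂ ⊇ ⋯ ⊇ B_{T+1}, and vectors v¹,…,v^{T+1} ∈ V satisfy: (i) for each t ∈ [T+1], v^t attains the supremum sup_{v∈V} Σ_{x∈B_t} ⟨v, μ(x)⟩; (ii) for each t ∈ [T], Σ_{x∈B_t} ⟨v^t, μ(x)⟩ ≥ ξ; (iii) for each t ∈ [T], B_{t+1} = B_t \ G_t where G_t := {x ∈ B_t : ⟨v^t, μ(x)⟩ ≥ (ξ/(2C))·‖μ(x)‖₁}; and (iv) Σ_{x∈B_{T+1}} ⟨v^{T+1}, μ(x)⟩ < ξ. Then: (a) T ≤ 2C/ξ; (b) for every v ∈ V, Σ_{x∈B_{T+1}} ⟨v, μ(x)⟩ < ξ; (c) for every x ∈ 𝒳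 \ B_{T+1} there is some t ∈ [T] such that ⟨v^t, μ(x)⟩ ≥ (ξ/(2C)) · ⟨v, μ(x)⟩ for every v ∈ V. -/

import Mathlib

noncomputable section

/-- The ℓ₁ norm of a vector in `ℝ^d`. -/
def l1norm {d : ℕ} (v : Fin d → ℝ) : ℝ := ∑ i, |v i|

/-- The standard inner product on `ℝ^d`. -/
def ip {d : ℕ} (u v : Fin d → ℝ) : ℝ := ∑ i, u i * v i

/-- `∑_{x ∈ B} ⟨v, μ(x)⟩`, as a `tsum` over the countable set `𝒳`. -/
def subSum {𝒳 : Type*} {d : ℕ} (μ : 𝒳 → Fin d → ℝ) (v : Fin d → ℝ) (B : Set 𝒳) : ℝ :=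
  ∑' x : 𝒳, B.indicator (fun y => ip v (μ y)) x

lemma l1norm_nonneg {d : ℕ} (w : Fin d → ℝ) : 0 ≤ l1norm w :=
  Finset.sum_nonneg fun i _ => abs_nonneg _

lemma abs_ip_le {d : ℕ} (v w : Fin d → ℝ) (hv : ∀ i, |v i| ≤ 1) : |ip v w| ≤ l1norm w := by
  unfold ip l1norm
  calc |∑ i, v i * w i| ≤ ∑ i, |v i * w i| := Finset.abs_sum_le_sum_abs _ _
    _ ≤ ∑ i, |w i| := Finset.sum_le_sum fun i _ => by
        rw [abs_mul]
        calc |v i| * |w i| ≤ 1 * |w i| :=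
              mul_le_mul_of_nonneg_right (hv i) (abs_nonneg _)
          _ = |w i| := one_mul _

lemma ip_le_l1 {d : ℕ} (v w : Fin d → ℝ) (hv : ∀ i, |v i| ≤ 1) : ip v w ≤ l1norm w :=
  (le_abs_self _).trans (abs_ip_le v w hv)

lemma summable_ind {𝒳 : Type*} [Countable 𝒳] {d : ℕ} (μ : 𝒳 → Fin d → ℝ)
    (hμsum : Summable fun x => l1norm (μ x)) (v : Fin d → ℝ) (hv : ∀ i, |v i| ≤ 1)
    (S : Set 𝒳) : Summable (S.indicator fun y => ip v (μ y)) := by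
  apply Summable.of_norm_bounded hμsum
  intro x
  rw [Real.norm_eq_abs]
  by_cases hx : x ∈ S
  · rw [Set.indicator_of_mem hx]; exact abs_ip_le v (μ x) hv
  · rw [Set.indicator_of_notMem hx]; simpa using l1norm_nonneg (μ x)

/-- guarantees of the idealized greedy policy-cover construction
(`IdealGreedyCover`): the greedy procedure that repeatedly maximizes the mass of the
uncovered states `B_t` halts after `T ≤ 2C/ξ` rounds, every `v ∈ V` has mass `< ξ` on
the remaining set, and every removed point is `(ξ/2C)`-covered by some chosen `vᵗ`. -/
theorem stmt_1 {𝒳 : Type*} [Countable 𝒳] {d : ℕ} (ξ C : ℝ) (hξ : 0 < ξ) (hC : ξ ≤ C)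
    (μ : 𝒳 → Fin d → ℝ)
    (hμsum : Summable fun x => l1norm (μ x))
    (hμC : ∑' x, l1norm (μ x) ≤ C)
    (V : Set (Fin d → ℝ)) (hVne : V.Nonempty)
    (hVbdd : ∀ v ∈ V, ∀ i, |v i| ≤ 1)
    (hVpos : ∀ v ∈ V, ∀ x, 0 ≤ ip v (μ x))
    (T : ℕ) (B : ℕ → Set 𝒳) (v : ℕ → Fin d → ℝ)
    (hB0 : B 0 = Set.univ)
    (hvV : ∀ t ≤ T, v t ∈ V)
    (hvmax : ∀ t ≤ T, ∀ u ∈ V, subSum μ u (B t) ≤ subSum μ (v t) (B t))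
    (hlarge : ∀ t < T, ξ ≤ subSum μ (v t) (B t))
    (hstep : ∀ t < T,
      B (t + 1) = B t \ {x ∈ B t | ξ / (2 * C) * l1norm (μ x) ≤ ip (v t) (μ x)})
    (hstop : subSum μ (v T) (B T) < ξ) :
    (T : ℝ) ≤ 2 * C / ξ ∧
      (∀ u ∈ V, subSum μ u (B T) < ξ) ∧
      (∀ x ∈ Set.univ \ B T, ∃ t < T, ∀ u ∈ V,
        ξ / (2 * C) * ip u (μ x) ≤ ip (v t) (μ x)) := by
  have hCpos : 0 < C := lt_of_lt_of_le hξ hC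
  set G : ℕ → Set 𝒳 := fun t => {x ∈ B t | ξ / (2 * C) * l1norm (μ x) ≤ ip (v t) (μ x)}
    with hGdef
  have hGsub : ∀ t, G t ⊆ B t := fun t x hx => hx.1
  -- monotonicity of B on [0, T]
  have hBmono : ∀ t ≤ T, ∀ s ≤ t, B t ⊆ B s := by
    intro t
    induction t with
    | zero => intro _ s hs; simp [Nat.le_zero.mp hs]
    | succ n ih =>
      intro hn s hs
      rcases Nat.lt_or_ge s (n+1) with h | h
      · have : B (n+1) ⊆ B n := by
          rw [hstep n (lt_of_lt_of_le (Nat.lt_succ_self n) hn)]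
          exact Set.diff_subset
        exact this.trans (ih (le_of_lt hn) s (Nat.lt_succ_iff.mp h))
      · have : s = n + 1 := le_antisymm hs h
        rw [this]
  -- membership in at most one G t
  have hGdisj : ∀ s t, s < t → t < T → ∀ x, x ∈ G s → x ∉ G t := by
    intro s t hst htT x hxs hxt
    have hxBt : x ∈ B t := hxt.1
    have hxBs1 : x ∈ B (s+1) := hBmono t (le_of_lt htT) (s+1) hst hxBt
    rw [hstep s (lt_trans hst htT)] at hxBs1
    exact hxBs1.2 hxs
  -- key per-round bound
  have hGmass : ∀ t < T, ξ / 2 ≤ ∑' x, (G t).indicator (fun y => l1norm (μ y)) x := by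
    intro t htT
    have hvt : v t ∈ V := hvV t (le_of_lt htT)
    have hvtb := hVbdd _ hvt
    have hsplit : subSum μ (v t) (B t)
        = subSum μ (v t) (G t) + subSum μ (v t) (B (t+1)) := by
      unfold subSum
      have hBeq : B t = G t ∪ B (t+1) := by
        rw [hstep t htT]
        exact (Set.union_diff_cancel (hGsub t)).symm
      rw [hBeq]
      have hdis : Disjoint (G t) (B (t+1)) := by
        rw [hstep t htT]; exact Set.disjoint_sdiff_right
      rw [Set.indicator_union_of_disjoint hdis]
      exact Summable.tsum_add (summable_ind μ hμsum _ hvtb _) (summable_ind μ hμsum _ hvtb _)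
    have hrem : subSum μ (v t) (B (t+1)) ≤ ξ / 2 := by
      have hle : ∀ x, (B (t+1)).indicator (fun y => ip (v t) (μ y)) x
          ≤ ξ / (2 * C) * l1norm (μ x) := by
        intro x
        by_cases hx : x ∈ B (t+1)
        · rw [Set.indicator_of_mem hx]
          have hx' : x ∉ G t := by
            rw [hstep t htT] at hx; exact hx.2
          have hxB : x ∈ B t := by
            rw [hstep t htT] at hx; exact hx.1
          by_contra hcon
          exact hx' ⟨hxB, le_of_not_ge hcon⟩
        · rw [Set.indicator_of_notMem hx]
          have := l1norm_nonneg (μ x)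
          positivity
      calc subSum μ (v t) (B (t+1))
          ≤ ∑' x, ξ / (2 * C) * l1norm (μ x) :=
            Summable.tsum_le_tsum hle (summable_ind μ hμsum _ hvtb _) (hμsum.mul_left _)
        _ = ξ / (2 * C) * ∑' x, l1norm (μ x) := tsum_mul_left
        _ ≤ ξ / (2 * C) * C := by
            apply mul_le_mul_of_nonneg_left hμC; positivity
        _ = ξ / 2 := by field_simp
    have hG1 : ξ / 2 ≤ subSum μ (v t) (G t) := by
      have := hlarge t htT
      rw [hsplit] at this
      linarith
    refine le_trans hG1 ?_
    apply Summable.tsum_le_tsum _ (summable_ind μ hμsum _ hvtb _) (hμsum.indicator _)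
    intro x
    by_cases hx : x ∈ G t
    · rw [Set.indicator_of_mem hx, Set.indicator_of_mem hx]
      exact ip_le_l1 _ _ hvtb
    · rw [Set.indicator_of_notMem hx, Set.indicator_of_notMem hx]
  refine ⟨?_, ?_, ?_⟩
  · -- part (a)
    have hsum : (T : ℝ) * (ξ / 2)
        ≤ ∑ t ∈ Finset.range T, ∑' x, (G t).indicator (fun y => l1norm (μ y)) x := by
      calc (T : ℝ) * (ξ / 2) = ∑ _t ∈ Finset.range T, ξ / 2 := by
            simp [Finset.sum_const, mul_comm]
        _ ≤ _ := Finset.sum_le_sum fun t ht => hGmass t (Finset.mem_range.mp ht)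
    have hswap : ∑ t ∈ Finset.range T, ∑' x, (G t).indicator (fun y => l1norm (μ y)) x
        = ∑' x, ∑ t ∈ Finset.range T, (G t).indicator (fun y => l1norm (μ y)) x :=
      (Summable.tsum_finsetSum fun t _ => hμsum.indicator _).symm
    have hptw : ∀ x, ∑ t ∈ Finset.range T, (G t).indicator (fun y => l1norm (μ y)) x
        ≤ l1norm (μ x) := by
      intro x
      by_cases h : ∃ t ∈ Finset.range T, x ∈ G t
      · obtain ⟨t₀, ht₀, hx₀⟩ := h
        rw [Finset.sum_eq_single t₀]
        · rw [Set.indicator_of_mem hx₀]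
        · intro t ht htne
          apply Set.indicator_of_notMem
          rcases lt_or_gt_of_ne htne with h1 | h1
          · intro hx
            exact hGdisj t t₀ h1 (Finset.mem_range.mp ht₀) x hx hx₀
          · exact hGdisj t₀ t h1 (Finset.mem_range.mp ht) x hx₀
        · intro h; exact absurd ht₀ h
      · push_neg at h
        have : ∀ t ∈ Finset.range T, (G t).indicator (fun y => l1norm (μ y)) x = 0 :=
          fun t ht => Set.indicator_of_notMem (h t ht) _
        rw [Finset.sum_eq_zero this]
        exact l1norm_nonneg _
    have hbound : ∑' x, ∑ t ∈ Finset.range T, (G t).indicator (fun y => l1norm (μ y)) x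
        ≤ C := by
      refine le_trans (Summable.tsum_le_tsum hptw ?_ hμsum) hμC
      exact summable_sum fun t _ => hμsum.indicator _
    have hTC : (T : ℝ) * (ξ / 2) ≤ C := by
      rw [hswap] at hsum; linarith
    rw [le_div_iff₀ hξ]
    nlinarith
  · -- part (b)
    intro u hu
    exact lt_of_le_of_lt (hvmax T le_rfl u hu) hstop
  · -- part (c)
    intro x hx
    have hxT : x ∉ B T := hx.2
    have hex : ∃ n, x ∉ B n := ⟨T, hxT⟩
    classical
    let n := Nat.find hex
    have hn : x ∉ B n := Nat.find_spec hex
    have hnT : n ≤ T := Nat.find_le hxT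
    have hn0 : n ≠ 0 := by
      intro h
      apply hn
      rw [h, hB0]; trivial
    obtain ⟨m, hm⟩ : ∃ m, n = m + 1 := ⟨n - 1, (Nat.succ_pred_eq_of_pos (Nat.pos_of_ne_zero hn0)).symm⟩
    have hmT : m < T := by omega
    have hxm : x ∈ B m := by
      by_contra hxm
      exact absurd (Nat.find_le hxm : n ≤ m) (by omega)
    have hxG : x ∈ G m := by
      by_contra hxG
      apply hn
      rw [hm, hstep m hmT]
      exact ⟨hxm, fun h => hxG h⟩
    refine ⟨m, hmT, fun u hu => ?_⟩
    calc ξ / (2 * C) * ip u (μ x) ≤ ξ / (2 * C) * l1norm (μ x) := by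
          apply mul_le_mul_of_nonneg_left (ip_le_l1 _ _ (hVbdd u hu))
          positivity
      _ ≤ ip (v m) (μ x) := hxG.2
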